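/- arXiv:cs/0412009 — 2 statements merged into one kernel-verified Lean document; each statement's English description precedes it below -/
import Mathlib

section
/- Every finite chordal graph with at least one vertex has a simplicial vertex, i.e., a vertex v such that the neighborhood Adj(v) induces a complete subgraph. -/
/-- A simple graph is chordal if every cycle of length at least 4 has a chord,
i.e., an edge of the graph joining two vertices of the cycle that is not an
edge of the cycle itself. -/
def IsChordal {V : Type*} (G : SimpleGraph V) : Prop :=
  ∀ ⦃v : V⦄ (c : G.Walk v v), c.IsCycle → 4 ≤ c.length →
    ∃ u w : V, u ∈ c.support ∧ w ∈ c.support ∧ G.Adj u w ∧ s(u, w) ∉ c.edges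

section Aux
open SimpleGraph
section Rch
variable {V : Type*} {G : SimpleGraph V}



/-- Reachability within a vertex set `t` (endpoints other than the start must lie in `t`). -/
def Rch (G : SimpleGraph V) (t : Set V) (x y : V) : Prop :=
  Relation.ReflTransGen (fun p q => G.Adj p q ∧ q ∈ t) x y

lemma rch_refl (t : Set V) (x : V) : Rch G t x x := Relation.ReflTransGen.refl

lemma rch_trans {t : Set V} {x y z : V} (h1 : Rch G t x y) (h2 : Rch G t y z) :
    Rch G t x z := Relation.ReflTransGen.trans h1 h2

lemma rch_step {t : Set V} {x y : V} (h : G.Adj x y) (hy : y ∈ t) : Rch G t x y :=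
  Relation.ReflTransGen.single ⟨h, hy⟩

lemma rch_mem {t : Set V} {x y : V} (h : Rch G t x y) (hx : x ∈ t) : y ∈ t := by
  induction h with
  | refl => exact hx
  | tail _ h ih => exact h.2

lemma rch_symm {t : Set V} {x y : V} (hx : x ∈ t) (h : Rch G t x y) : Rch G t y x := by
  induction h with
  | refl => exact rch_refl t x
  | @tail b c _ h ih =>
      exact rch_trans (rch_step h.1.symm (rch_mem (by assumption) hx)) ih

lemma rch_of_walk {t : Set V} {x y : V} (w : G.Walk x y) (hw : ∀ z ∈ w.support, z ∈ t) :
    Rch G t x y := by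
  induction w with
  | nil => exact rch_refl t _
  | @cons a b c h w ih =>
      refine rch_trans (rch_step h (hw b ?_)) (ih fun z hz => hw z ?_)
      · simp [Walk.support_cons]
      · simp [Walk.support_cons, hz]

lemma walk_of_rch {t : Set V} {a x : V} (h : Rch G t a x) (ha : a ∈ t) :
    ∃ w : G.Walk a x, ∀ z ∈ w.support, z ∈ t ∧ Rch G t a z := by
  induction h with
  | refl => exact ⟨Walk.nil, by simp [ha, rch_refl]⟩
  | @tail b c hab h ih =>
      obtain ⟨w, hw⟩ := ih
      refine ⟨w.concat h.1, fun z hz => ?_⟩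
      rw [Walk.support_concat, List.mem_append, List.mem_singleton] at hz
      rcases hz with hz | rfl
      · exact hw z hz
      · exact ⟨h.2, rch_trans hab (rch_step h.1 h.2)⟩

end Rch

section Paths
variable {V : Type*} [DecidableEq V] {G : SimpleGraph V}

set_option linter.unusedSectionVars false

lemma eq_of_length_zero {u v : V} (p : G.Walk u v) (h : p.length = 0) : u = v := by
  cases p with
  | nil => rfl
  | cons h' p' => simp at h

lemma edge_mem_of_length_one {u v : V} (p : G.Walk u v) (h : p.length = 1) :
    s(u, v) ∈ p.edges := by
  cases p with
  | nil => simp at h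
  | cons h' p' =>
      simp only [Walk.length_cons, Nat.add_eq_right] at h
      have := eq_of_length_zero p' h
      subst this; simp

lemma shortcut_aux {u v x y : V} (p : G.Walk u v) (hp : p.IsPath)
    (hx : x ∈ p.support) (hxy : G.Adj x y)
    (he : s(x, y) ∉ p.edges) (hy : y ∈ (p.dropUntil x hx).support) :
    ∃ q : G.Walk u v, q.IsPath ∧ (∀ z ∈ q.support, z ∈ p.support) ∧ q.length < p.length := by
  set q1 := p.takeUntil x hx with hq1
  set q2 := p.dropUntil x hx with hq2
  have hspec : q1.append q2 = p := p.take_spec hx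
  have hq1path : q1.IsPath := hp.takeUntil hx
  have hq2path : q2.IsPath := hp.dropUntil hx
  have lenp : q1.length + q2.length = p.length := by
    rw [← hspec, Walk.length_append]
  have suppp : p.support = q1.support ++ q2.support.tail := by
    rw [← hspec, Walk.support_append]
  set r := q2.takeUntil y hy with hr
  set q3 := q2.dropUntil y hy with hq3
  have hspec2 : r.append q3 = q2 := q2.take_spec hy
  have len2 : r.length + q3.length = q2.length := by
    rw [← hspec2, Walk.length_append]
  have supp2 : q2.support = r.support ++ q3.support.tail := by
    rw [← hspec2, Walk.support_append]
  have hq3path : q3.IsPath := hq2path.dropUntil hy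
  have hxney : x ≠ y := hxy.ne
  have hxq3 : x ∉ q3.support := by
    have hnd : q2.support.Nodup := hq2path.support_nodup
    rw [supp2, List.nodup_append] at hnd
    have hxr : x ∈ r.support := r.start_mem_support
    have hxnt : x ∉ q3.support.tail := fun hmem => hnd.2.2 x hxr x hmem rfl
    rw [q3.support_eq_cons]
    intro hmem
    rcases List.mem_cons.1 hmem with h1 | h1
    · exact hxney h1
    · exact hxnt h1
  have hq3sub : q3.support ⊆ q2.support.tail := by
    intro z hz
    have : z ∈ q2.support := q2.support_dropUntil_subset hy hz
    rw [q2.support_eq_cons] at this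
    rcases List.mem_cons.1 this with h1 | h1
    · exact absurd (h1 ▸ hz) hxq3
    · exact h1
  have hrlen : 2 ≤ r.length := by
    rcases Nat.lt_or_ge r.length 2 with h | h
    · interval_cases h' : r.length
      · exact absurd (eq_of_length_zero r h') hxney
      · exact absurd (p.edges_dropUntil_subset hx (q2.edges_takeUntil_subset hy
          (edge_mem_of_length_one r h'))) he
    · exact h
  refine ⟨q1.append (Walk.cons hxy q3), ?_, ?_, ?_⟩
  · apply Walk.IsPath.mk'
    rw [Walk.support_append, Walk.support_cons, List.tail_cons, List.nodup_append]
    refine ⟨hq1path.support_nodup, hq3path.support_nodup, ?_⟩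
    have hnd : p.support.Nodup := hp.support_nodup
    rw [suppp, List.nodup_append] at hnd
    intro z hz1 z' hz3
    exact hnd.2.2 z hz1 z' (hq3sub hz3)
  · intro z hz
    rw [Walk.support_append, Walk.support_cons, List.tail_cons, List.mem_append] at hz
    rcases hz with hz | hz
    · exact p.support_takeUntil_subset hx hz
    · exact p.support_dropUntil_subset hx (q2.support_dropUntil_subset hy hz)
  · rw [Walk.length_append, Walk.length_cons, ← lenp, ← len2]
    omega

lemma shortcut {u v x y : V} (p : G.Walk u v) (hp : p.IsPath)
    (hx : x ∈ p.support) (hy : y ∈ p.support) (hxy : G.Adj x y)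
    (he : s(x, y) ∉ p.edges) :
    ∃ q : G.Walk u v, q.IsPath ∧ (∀ z ∈ q.support, z ∈ p.support) ∧ q.length < p.length := by
  have hsplit : y ∈ (p.takeUntil x hx).support ∨ y ∈ (p.dropUntil x hx).support := by
    have := p.take_spec hx
    rw [← this, Walk.mem_support_append_iff] at hy
    exact hy
  rcases hsplit with hcase | hcase
  · -- y lies in the prefix before x: shortcut the prefix, reattach the suffix
    set q1 := p.takeUntil x hx with hq1def
    set q2 := p.dropUntil x hx with hq2def
    have hspec : q1.append q2 = p := p.take_spec hx
    have hq1path : q1.IsPath := hp.takeUntil hx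
    have hxend : x ∈ (q1.dropUntil y hcase).support := Walk.end_mem_support _
    have he' : s(y, x) ∉ q1.edges := by
      rw [Sym2.eq_swap]
      exact fun hmem => he (p.edges_takeUntil_subset hx hmem)
    obtain ⟨q1', hq1'path, hq1'sub, hq1'len⟩ :=
      shortcut_aux q1 hq1path hcase hxy.symm he' hxend
    refine ⟨q1'.append q2, ?_, ?_, ?_⟩
    · apply Walk.IsPath.mk'
      rw [Walk.support_append, List.nodup_append]
      have hnd : p.support.Nodup := hp.support_nodup
      have hps : p.support = q1.support ++ q2.support.tail := by
        rw [← hspec, Walk.support_append]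
      rw [hps, List.nodup_append] at hnd
      exact ⟨hq1'path.support_nodup, hnd.2.1, fun z hz1 z' hz2 => hnd.2.2 z (hq1'sub z hz1) z' hz2⟩
    · intro z hz
      rw [Walk.mem_support_append_iff] at hz
      rcases hz with hz | hz
      · exact p.support_takeUntil_subset hx (hq1'sub z hz)
      · exact p.support_dropUntil_subset hx hz
    · have lenp : q1.length + q2.length = p.length := by
        rw [← hspec, Walk.length_append]
      rw [Walk.length_append]
      omega
  · exact shortcut_aux p hp hx hxy he hcase

lemma adj_of_length_one {u v : V} (p : G.Walk u v) (h : p.length = 1) : G.Adj u v := by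
  cases p with
  | nil => simp at h
  | cons h' p' =>
      simp only [Walk.length_cons, Nat.add_eq_right] at h
      have := eq_of_length_zero p' h
      subst this; exact h'

lemma exists_min_path {u v : V} (A : Set V) (w0 : G.Walk u v)
    (hw0 : ∀ z ∈ w0.support, z = u ∨ z = v ∨ z ∈ A) :
    ∃ p : G.Walk u v, p.IsPath ∧ (∀ z ∈ p.support, z = u ∨ z = v ∨ z ∈ A) ∧
      ∀ x ∈ p.support, ∀ y ∈ p.support, G.Adj x y → s(x, y) ∈ p.edges := by
  classical
  let Pred : ℕ → Prop := fun n => ∃ p : G.Walk u v, p.IsPath ∧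
    (∀ z ∈ p.support, z = u ∨ z = v ∨ z ∈ A) ∧ p.length = n
  have h0 : ∃ n, Pred n :=
    ⟨(w0.toPath : G.Walk u v).length, w0.toPath, w0.toPath.2,
      fun z hz => hw0 z (w0.support_toPath_subset hz), rfl⟩
  obtain ⟨p, hpath, hprop, hlen⟩ := Nat.find_spec h0
  refine ⟨p, hpath, hprop, fun x hx y hy hadj => ?_⟩
  by_contra he
  obtain ⟨q, hqpath, hqsub, hqlen⟩ := shortcut p hpath hx hy hadj he
  exact Nat.find_min h0 (hlen ▸ hqlen)
    ⟨q, hqpath, fun z hz => hprop z (hqsub z hz), rfl⟩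

lemma no_AB_cycle (hG : IsChordal G) {u v : V} {A B : Set V}
    (hdisj : ∀ z, z ∈ A → z ∈ B → False)
    (huA : u ∉ A) (hvB : v ∉ B) (huB : u ∉ B) (hvA : v ∉ A)
    (hAB : ∀ x ∈ A, ∀ y ∈ B, ¬G.Adj x y)
    (huv : ¬G.Adj u v) (hne : u ≠ v)
    (wA : G.Walk u v) (hwA : ∀ z ∈ wA.support, z = u ∨ z = v ∨ z ∈ A)
    (wB : G.Walk u v) (hwB : ∀ z ∈ wB.support, z = u ∨ z = v ∨ z ∈ B) :
    False := by
  obtain ⟨P, hPpath, hPprop, hPmin⟩ := exists_min_path A wA hwA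
  obtain ⟨Q, hQpath, hQprop, hQmin⟩ := exists_min_path B wB hwB
  have hlen2 : ∀ (w : G.Walk u v), w.IsPath → 2 ≤ w.length := by
    intro w _
    rcases Nat.lt_or_ge w.length 2 with h | h
    · interval_cases h' : w.length
      · exact absurd (eq_of_length_zero w h') hne
      · exact absurd (adj_of_length_one w h') huv
    · exact h
  have hPlen := hlen2 P hPpath
  have hQlen := hlen2 Q hQpath
  set C : G.Walk u u := P.append Q.reverse with hC
  have hClen : C.length = P.length + Q.length := by
    rw [hC, Walk.length_append, Walk.length_reverse]
  -- membership in C.support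
  have hCsup : ∀ z, z ∈ C.support → z ∈ P.support ∨ z ∈ Q.support := by
    intro z hz
    rw [hC, Walk.mem_support_append_iff] at hz
    rcases hz with hz | hz
    · exact Or.inl hz
    · rw [Walk.support_reverse, List.mem_reverse] at hz
      exact Or.inr hz
  have hPQ_inter : ∀ z, z ∈ P.support → z ∈ Q.support → z = u ∨ z = v := by
    intro z hzP hzQ
    rcases hPprop z hzP with h | h | h
    · exact Or.inl h
    · exact Or.inr h
    · rcases hQprop z hzQ with h' | h' | h'
      · exact Or.inl h'
      · exact Or.inr h'
      · exact absurd h' (fun h'' => hdisj z h h'')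
  have hedgeC : ∀ e, e ∈ C.edges ↔ e ∈ P.edges ∨ e ∈ Q.edges := by
    intro e
    rw [hC, Walk.edges_append, List.mem_append, Walk.edges_reverse, List.mem_reverse]
  have hcyc : C.IsCycle := by
    rw [Walk.isCycle_def]
    refine ⟨⟨?_⟩, ?_, ?_⟩
    · -- edges nodup
      rw [hC, Walk.edges_append, List.nodup_append]
      refine ⟨hPpath.isTrail.edges_nodup, hQpath.reverse.isTrail.edges_nodup, ?_⟩
      intro e heP e' heQ hee
      subst e'
      rw [Walk.edges_reverse, List.mem_reverse] at heQ
      induction e with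
      | h c d =>
        have hcP := P.fst_mem_support_of_mem_edges heP
        have hdP := P.snd_mem_support_of_mem_edges heP
        have hcQ := Q.fst_mem_support_of_mem_edges heQ
        have hdQ := Q.snd_mem_support_of_mem_edges heQ
        have hadj : G.Adj c d := P.adj_of_mem_edges heP
        rcases hPQ_inter c hcP hcQ with rfl | rfl <;>
          rcases hPQ_inter d hdP hdQ with rfl | rfl
        · exact hadj.ne rfl
        · exact huv hadj
        · exact huv hadj.symm
        · exact hadj.ne rfl
    · intro hnil
      have : C.length = 0 := by rw [hnil]; rfl
      omega
    · rw [hC, Walk.tail_support_append, List.nodup_append]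
      refine ⟨hPpath.support_nodup.tail, hQpath.reverse.support_nodup.tail, ?_⟩
      intro z hzP z' hzQ hzz
      subst z'
      have hzP' : z ∈ P.support := List.mem_of_mem_tail hzP
      have hzQ' : z ∈ Q.reverse.support := List.mem_of_mem_tail hzQ
      have hzu : z ≠ u := by
        intro rfl'
        subst rfl'
        have := hPpath.support_nodup
        rw [P.support_eq_cons] at this
        exact (List.nodup_cons.1 this).1 hzP
      have hzv : z ≠ v := by
        intro rfl'
        subst rfl'
        have := hQpath.reverse.support_nodup
        rw [Q.reverse.support_eq_cons] at this
        exact (List.nodup_cons.1 this).1 hzQ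
      rw [Walk.support_reverse, List.mem_reverse] at hzQ'
      rcases hPQ_inter z hzP' hzQ' with h | h
      · exact hzu h
      · exact hzv h
  have hlen4 : 4 ≤ C.length := by omega
  obtain ⟨x, y, hx, hy, hadj, hne_edge⟩ := hG C hcyc hlen4
  -- classify
  have hclassP : ∀ z, z ∈ P.support → z ∉ Q.support → z ∈ A := by
    intro z hz hzn
    rcases hPprop z hz with rfl | rfl | h
    · exact absurd Q.start_mem_support hzn
    · exact absurd Q.end_mem_support hzn
    · exact h
  have hclassQ : ∀ z, z ∈ Q.support → z ∉ P.support → z ∈ B := by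
    intro z hz hzn
    rcases hQprop z hz with rfl | rfl | h
    · exact absurd P.start_mem_support hzn
    · exact absurd P.end_mem_support hzn
    · exact h
  have hbothP : ¬(x ∈ P.support ∧ y ∈ P.support) := by
    rintro ⟨h1, h2⟩
    exact hne_edge ((hedgeC _).2 (Or.inl (hPmin x h1 y h2 hadj)))
  have hbothQ : ¬(x ∈ Q.support ∧ y ∈ Q.support) := by
    rintro ⟨h1, h2⟩
    exact hne_edge ((hedgeC _).2 (Or.inr (hQmin x h1 y h2 hadj)))
  rcases hCsup x hx with hxP | hxQ <;> rcases hCsup y hy with hyP | hyQ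
  · exact hbothP ⟨hxP, hyP⟩
  · by_cases hxQ : x ∈ Q.support
    · exact hbothQ ⟨hxQ, hyQ⟩
    · by_cases hyP : y ∈ P.support
      · exact hbothP ⟨hxP, hyP⟩
      · exact hAB x (hclassP x hxP hxQ) y (hclassQ y hyQ hyP) hadj
  · by_cases hxP : x ∈ P.support
    · exact hbothP ⟨hxP, hyP⟩
    · by_cases hyQ : y ∈ Q.support
      · exact hbothQ ⟨hxQ, hyQ⟩
      · exact hAB y (hclassP y hyP hyQ) x (hclassQ x hxQ hxP) hadj.symm
  · exact hbothQ ⟨hxQ, hyQ⟩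


end Paths
end Aux

open SimpleGraph

/-- `v` is simplicial within the vertex set `s`. -/
def SimpIn {V : Type*} (G : SimpleGraph V) (s : Finset V) (v : V) : Prop :=
  ∀ x ∈ s, ∀ y ∈ s, G.Adj v x → G.Adj v y → x ≠ y → G.Adj x y

lemma dichotomy {V : Type*} [DecidableEq V] {G : SimpleGraph V} (hG : IsChordal G) :
    ∀ n (s : Finset V), s.card ≤ n →
      (∀ x ∈ s, ∀ y ∈ s, x ≠ y → G.Adj x y) ∨
      (∃ v ∈ s, ∃ w ∈ s, v ≠ w ∧ ¬G.Adj v w ∧ SimpIn G s v ∧ SimpIn G s w) := by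
  intro n
  induction n using Nat.strong_induction_on with
  | _ n IH =>
  intro s hcard
  by_cases hclq : ∀ x ∈ s, ∀ y ∈ s, x ≠ y → G.Adj x y
  · exact Or.inl hclq
  right
  push_neg at hclq
  obtain ⟨a, ha, b, hb, hab, hnadj⟩ := hclq
  classical
  -- separators
  set Sep : Finset V → Prop := fun S =>
    S ⊆ s ∧ a ∉ S ∧ b ∉ S ∧ ¬ Rch G (↑(s \ S)) a b with hSepdef
  have hSep0 : Sep ((s.erase a).erase b) := by
    refine ⟨Finset.Subset.trans (Finset.erase_subset _ _) (Finset.erase_subset _ _),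
      fun h => ?_, fun h => ?_, fun h => ?_⟩
    · exact (Finset.mem_erase.1 (Finset.mem_of_mem_erase h)).1 rfl
    · exact (Finset.mem_erase.1 h).1 rfl
    · -- from a you can only reach a
      have : ∀ x, Rch G (↑(s \ (s.erase a).erase b)) a x → x = a := by
        intro x hx
        induction hx with
        | refl => rfl
        | @tail c d hac hcd ih =>
            rcases hcd with ⟨hadj, hd⟩
            rw [ih] at hadj
            simp only [Finset.coe_sdiff, Set.mem_diff, Finset.mem_coe,
              Finset.mem_erase] at hd
            have hd' : d = a ∨ d = b := by
              by_contra hcon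
              push_neg at hcon
              exact hd.2 ⟨hcon.2, hcon.1, hd.1⟩
            rcases hd' with rfl | rfl
            · exact absurd hadj (G.irrefl)
            · exact absurd hadj hnadj
      exact hab (this b h).symm
  have hex : ∃ m, ∃ S, Sep S ∧ S.card = m := ⟨_, _, hSep0, rfl⟩
  obtain ⟨S, hSep, hScard⟩ := Nat.find_spec hex
  have hmin : ∀ S', Sep S' → S.card ≤ S'.card := by
    intro S' h
    rw [hScard]
    exact Nat.find_min' hex ⟨S', h, rfl⟩
  obtain ⟨hSsub, haS, hbS, hsep⟩ := hSep
  set t : Finset V := s \ S with ht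
  have hat : a ∈ (↑t : Set V) := by simp [ht, ha, haS]
  have hbt : b ∈ (↑t : Set V) := by simp [ht, hb, hbS]
  -- every vertex of S has neighbors in the components of a and of b
  have key : ∀ u' ∈ S,
      (∃ x, G.Adj u' x ∧ x ∈ (↑t : Set V) ∧ Rch G ↑t a x) ∧
      (∃ y, G.Adj u' y ∧ y ∈ (↑t : Set V) ∧ Rch G ↑t b y) := by
    intro u' hu'
    have hua : u' ≠ a := fun h => haS (h ▸ hu')
    have hub : u' ≠ b := fun h => hbS (h ▸ hu')
    have hne' : ¬ Sep (S.erase u') := by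
      intro h
      have h1 := hmin _ h
      have h2 := Finset.card_erase_lt_of_mem hu'
      omega
    have hrch : Rch G (↑(s \ S.erase u')) a b := by
      by_contra h
      exact hne' ⟨Finset.Subset.trans (Finset.erase_subset _ _) hSsub,
        fun hmem => haS (Finset.mem_of_mem_erase hmem),
        fun hmem => hbS (Finset.mem_of_mem_erase hmem), h⟩
    have ha' : a ∈ (↑(s \ S.erase u') : Set V) := by
      simp only [Finset.coe_sdiff, Set.mem_diff, Finset.mem_coe, Finset.mem_erase]
      exact ⟨ha, fun hc => haS hc.2⟩
    obtain ⟨w, hw⟩ := walk_of_rch hrch ha'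
    set p : G.Walk a b := (w.toPath : G.Walk a b) with hpdef
    have hppath : p.IsPath := w.toPath.2
    have hpsub : ∀ z ∈ p.support, z ∈ (↑(s \ S.erase u') : Set V) := by
      intro z hz
      exact (hw z (w.support_toPath_subset hz)).1
    have hmemt : ∀ z, z ∈ (↑(s \ S.erase u') : Set V) → z ≠ u' → z ∈ (↑t : Set V) := by
      intro z hz hzu
      simp only [Finset.coe_sdiff, Set.mem_diff, Finset.mem_coe, Finset.mem_erase] at hz ⊢
      simp only [ht, Finset.mem_sdiff]
      refine ⟨hz.1, fun hcon => hz.2 ⟨hzu, hcon⟩⟩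
    have hu'p : u' ∈ p.support := by
      by_contra hcon
      exact hsep (rch_of_walk p (fun z hz => hmemt z (hpsub z hz)
        (fun h => hcon (h ▸ hz))))
    constructor
    · -- a-side neighbor: last edge of the prefix
      set p1 : G.Walk a u' := p.takeUntil u' hu'p with hp1
      have hp1path : p1.IsPath := hppath.takeUntil hu'p
      obtain ⟨x, hadjx, q, hq⟩ := Walk.exists_eq_cons_of_ne hua p1.reverse
      have hqsup : ∀ z ∈ q.support, z ∈ (↑t : Set V) := by
        intro z hz
        have hzp1 : z ∈ p1.support := by
          have : z ∈ p1.reverse.support := by rw [hq, Walk.support_cons]; exact List.mem_cons_of_mem _ hz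
          rwa [Walk.support_reverse, List.mem_reverse] at this
        have hzu : z ≠ u' := by
          intro h
          subst h
          have hnd : p1.reverse.support.Nodup := hp1path.reverse.support_nodup
          rw [hq, Walk.support_cons, List.nodup_cons] at hnd
          exact hnd.1 hz
        exact hmemt z (hpsub z (p.support_takeUntil_subset hu'p hzp1)) hzu
      refine ⟨x, hadjx, hqsup x q.start_mem_support, rch_of_walk q.reverse ?_⟩
      intro z hz
      rw [Walk.support_reverse, List.mem_reverse] at hz
      exact hqsup z hz
    · -- b-side neighbor: first edge of the suffix
      set p2 : G.Walk u' b := p.dropUntil u' hu'p with hp2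
      have hp2path : p2.IsPath := hppath.dropUntil hu'p
      obtain ⟨y, hadjy, q, hq⟩ := Walk.exists_eq_cons_of_ne hub p2
      have hqsup : ∀ z ∈ q.support, z ∈ (↑t : Set V) := by
        intro z hz
        have hzp2 : z ∈ p2.support := by
          rw [hq, Walk.support_cons]; exact List.mem_cons_of_mem _ hz
        have hzu : z ≠ u' := by
          intro h
          subst h
          have hnd : p2.support.Nodup := hp2path.support_nodup
          rw [hq, Walk.support_cons, List.nodup_cons] at hnd
          exact hnd.1 hz
        exact hmemt z (hpsub z (p.support_dropUntil_subset hu'p hzp2)) hzu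
      refine ⟨y, hadjy, hqsup y q.start_mem_support, rch_of_walk q.reverse ?_⟩
      intro z hz
      rw [Walk.support_reverse, List.mem_reverse] at hz
      exact hqsup z hz
  -- the separator is a clique
  set Aset : Set V := {z | z ∈ (↑t : Set V) ∧ Rch G ↑t a z} with hAset
  set Bset : Set V := {z | z ∈ (↑t : Set V) ∧ Rch G ↑t b z} with hBset
  have hABdisj : ∀ z, z ∈ Aset → z ∈ Bset → False := by
    intro z hzA hzB
    exact hsep (rch_trans hzA.2 (rch_symm hbt hzB.2))
  have hABadj : ∀ x ∈ Aset, ∀ y ∈ Bset, ¬G.Adj x y := by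
    intro x hx y hy hadj
    exact hsep (rch_trans (rch_trans hx.2 (rch_step hadj hy.1)) (rch_symm hbt hy.2))
  have hSnotA : ∀ u' ∈ S, u' ∉ Aset := by
    intro u' hu' hcon
    have := hcon.1
    simp [ht] at this
    exact this.2 hu'
  have hSnotB : ∀ u' ∈ S, u' ∉ Bset := by
    intro u' hu' hcon
    have := hcon.1
    simp [ht] at this
    exact this.2 hu'
  have hSclq : ∀ u' ∈ S, ∀ v' ∈ S, u' ≠ v' → G.Adj u' v' := by
    intro u' hu' v' hv' hne
    by_contra hno
    obtain ⟨⟨xu, hxu_adj, hxu_t, hxu_rch⟩, ⟨yu, hyu_adj, hyu_t, hyu_rch⟩⟩ := key u' hu'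
    obtain ⟨⟨xv, hxv_adj, hxv_t, hxv_rch⟩, ⟨yv, hyv_adj, hyv_t, hyv_rch⟩⟩ := key v' hv'
    -- walk through A from u' to v'
    obtain ⟨w1, hw1⟩ := walk_of_rch hxu_rch hat
    obtain ⟨w2, hw2⟩ := walk_of_rch hxv_rch hat
    obtain ⟨w3, hw3⟩ := walk_of_rch hyu_rch hbt
    obtain ⟨w4, hw4⟩ := walk_of_rch hyv_rch hbt
    set wA : G.Walk u' v' :=
      Walk.cons hxu_adj ((w1.reverse.append w2).concat hxv_adj.symm) with hwAdef
    set wB : G.Walk u' v' :=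
      Walk.cons hyu_adj ((w3.reverse.append w4).concat hyv_adj.symm) with hwBdef
    have hwAsub : ∀ z ∈ wA.support, z = u' ∨ z = v' ∨ z ∈ Aset := by
      intro z hz
      rw [hwAdef, Walk.support_cons, List.mem_cons] at hz
      rcases hz with rfl | hz
      · exact Or.inl rfl
      rw [Walk.support_concat, List.mem_append,
        List.mem_singleton] at hz
      rcases hz with hz | rfl
      · right; right
        rw [Walk.mem_support_append_iff] at hz
        rcases hz with hz | hz
        · rw [Walk.support_reverse, List.mem_reverse] at hz
          exact ⟨(hw1 z hz).1, (hw1 z hz).2⟩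
        · exact ⟨(hw2 z hz).1, (hw2 z hz).2⟩
      · exact Or.inr (Or.inl rfl)
    have hwBsub : ∀ z ∈ wB.support, z = u' ∨ z = v' ∨ z ∈ Bset := by
      intro z hz
      rw [hwBdef, Walk.support_cons, List.mem_cons] at hz
      rcases hz with rfl | hz
      · exact Or.inl rfl
      rw [Walk.support_concat, List.mem_append,
        List.mem_singleton] at hz
      rcases hz with hz | rfl
      · right; right
        rw [Walk.mem_support_append_iff] at hz
        rcases hz with hz | hz
        · rw [Walk.support_reverse, List.mem_reverse] at hz
          exact ⟨(hw3 z hz).1, (hw3 z hz).2⟩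
        · exact ⟨(hw4 z hz).1, (hw4 z hz).2⟩
      · exact Or.inr (Or.inl rfl)
    exact no_AB_cycle hG hABdisj (hSnotA u' hu') (hSnotB v' hv') (hSnotB u' hu')
      (hSnotA v' hv') hABadj hno hne wA hwAsub wB hwBsub
  -- one simplicial vertex on each side
  have side : ∀ c : V, c ∈ (↑t : Set V) → ∀ b', b' ∈ s → b' ∉ S → ¬ Rch G ↑t c b' →
      ∃ w, (w ∈ (↑t : Set V) ∧ Rch G ↑t c w) ∧ SimpIn G s w := by
    intro c hct b' hb's hb'S hb'rch
    set Cc : Finset V := t.filter (fun x => Rch G ↑t c x) with hCc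
    set s' : Finset V := Cc ∪ S with hs'
    have hs'sub : s' ⊆ s := by
      intro z hz
      rw [hs', Finset.mem_union] at hz
      rcases hz with hz | hz
      · exact (Finset.mem_sdiff.1 (Finset.filter_subset _ t hz)).1
      · exact hSsub hz
    have hb's' : b' ∉ s' := by
      rw [hs', Finset.mem_union]
      rintro (hz | hz)
      · exact hb'rch (Finset.mem_filter.1 hz).2
      · exact hb'S hz
    have hcard' : s'.card < n := by
      have : s' ⊂ s := (Finset.ssubset_iff_of_subset hs'sub).2 ⟨b', hb's, hb's'⟩
      have := Finset.card_lt_card this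
      omega
    have hclose : ∀ w, w ∈ (↑t : Set V) → Rch G ↑t c w → ∀ y ∈ s, G.Adj w y → y ∈ s' := by
      intro w hwt hwr y hy hadj
      by_cases hyS : y ∈ S
      · exact Finset.mem_union_right _ hyS
      · have hyt : y ∈ (↑t : Set V) := by
          simp only [ht, Finset.coe_sdiff, Set.mem_diff, Finset.mem_coe]
          exact ⟨hy, hyS⟩
        refine Finset.mem_union_left _ (Finset.mem_filter.2 ⟨?_, rch_trans hwr (rch_step hadj hyt)⟩)
        simpa using hyt
    rcases IH s'.card hcard' s' le_rfl with hclq' | ⟨v1, hv1, v2, hv2, hne12, hnadj12, hs1, hs2⟩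
    · refine ⟨c, ⟨hct, rch_refl (G:=G) ↑t c⟩, ?_⟩
      intro x hx y hy h1 h2 hxy
      exact hclq' x (hclose c hct (rch_refl (G:=G) ↑t c) x hx h1)
        y (hclose c hct (rch_refl (G:=G) ↑t c) y hy h2) hxy
    · have hnotboth : v1 ∈ Cc ∨ v2 ∈ Cc := by
        rw [hs', Finset.mem_union] at hv1 hv2
        rcases hv1 with h1 | h1
        · exact Or.inl h1
        rcases hv2 with h2 | h2
        · exact Or.inr h2
        exact absurd (hSclq v1 h1 v2 h2 hne12) hnadj12
      have main : ∀ w, w ∈ Cc → SimpIn G s' w → ∃ w', (w' ∈ (↑t : Set V) ∧ Rch G ↑t c w') ∧ SimpIn G s w' := by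
        intro w hw hsimp
        obtain ⟨hwt', hwr⟩ := Finset.mem_filter.1 hw
        have hwt : w ∈ (↑t : Set V) := by simpa using hwt'
        refine ⟨w, ⟨hwt, hwr⟩, ?_⟩
        intro x hx y hy h1 h2 hxy
        exact hsimp x (hclose w hwt hwr x hx h1) y (hclose w hwt hwr y hy h2) h1 h2 hxy
      rcases hnotboth with h | h
      · exact main v1 h hs1
      · have hs2' : SimpIn G s' v2 := hs2
        exact main v2 h hs2'
  obtain ⟨vA, ⟨hvAt, hvArch⟩, hvAsimp⟩ := side a hat b hb hbS hsep
  have hsep' : ¬ Rch G ↑t b a := fun h => hsep (rch_symm hbt h)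
  obtain ⟨vB, ⟨hvBt, hvBrch⟩, hvBsimp⟩ := side b hbt a ha haS hsep'
  have hvAs : vA ∈ s := by
    simp only [ht, Finset.coe_sdiff, Set.mem_diff, Finset.mem_coe] at hvAt
    exact hvAt.1
  have hvBs : vB ∈ s := by
    simp only [ht, Finset.coe_sdiff, Set.mem_diff, Finset.mem_coe] at hvBt
    exact hvBt.1
  have hABne : vA ≠ vB := by
    intro h
    subst h
    exact hsep (rch_trans hvArch (rch_symm hbt hvBrch))
  have hABnadj : ¬G.Adj vA vB := by
    intro h
    exact hsep (rch_trans (rch_trans hvArch (rch_step h hvBt)) (rch_symm hbt hvBrch))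
  exact ⟨vA, hvAs, vB, hvBs, hABne, hABnadj, hvAsimp, hvBsimp⟩

/-- every finite chordal graph with at least one vertex has a
simplicial vertex, i.e., a vertex whose neighborhood induces a clique. -/
theorem chordal_has_simplicial_vertex {V : Type*} [Fintype V] [Nonempty V]
    (G : SimpleGraph V) (hG : IsChordal G) :
    ∃ v : V, G.IsClique (G.neighborSet v) := by
  classical
  rcases dichotomy hG (Finset.univ : Finset V).card Finset.univ le_rfl with
    hclq | ⟨v, _, w, _, _, _, hv, _⟩
  · obtain ⟨v⟩ := ‹Nonempty V›
    exact ⟨v, fun x _ y _ hxy => hclq x (Finset.mem_univ x) y (Finset.mem_univ y) hxy⟩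
  · exact ⟨v, fun x hx y hy hxy =>
      hv x (Finset.mem_univ x) y (Finset.mem_univ y) hx hy hxy⟩
end

section
/- A finite simple graph is chordal if and only if it admits a perfect elimination ordering, i.e., an ordering v₁,...,vₙ of its vertices such that for each i, the set Adj(vᵢ) ∩ {v_{i+1},...,vₙ} induces a clique. -/
namespace ChordalAux
open SimpleGraph

variable {V : Type*} {G : SimpleGraph V}

/-- A vertex is simplicial if its neighborhood is a clique. -/
def Simplicial (G : SimpleGraph V) (v : V) : Prop :=
  ∀ ⦃y⦄, G.Adj v y → ∀ ⦃z⦄, G.Adj v z → y ≠ z → G.Adj y z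

lemma isChordal_induce (hG : IsChordal G) (s : Set V) :
    IsChordal (G.induce s) := by
  intro v c hc hlen
  set f := (SimpleGraph.Embedding.induce s (G := G)).toHom with hf
  have hinj : Function.Injective f := (SimpleGraph.Embedding.induce s (G := G)).injective
  have hc' : (c.map f).IsCycle := (Walk.map_isCycle_iff_of_injective hinj).mpr hc
  have hlen' : 4 ≤ (c.map f).length := by rwa [Walk.length_map]
  obtain ⟨u, w, hu, hw, huw, he⟩ := hG (c.map f) hc' hlen'
  rw [Walk.support_map, List.mem_map] at hu hw
  obtain ⟨u₀, hu₀, rfl⟩ := hu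
  obtain ⟨w₀, hw₀, rfl⟩ := hw
  refine ⟨u₀, w₀, hu₀, hw₀, ?_, ?_⟩
  · exact huw
  · intro hmem
    apply he
    rw [Walk.edges_map, List.mem_map]
    exact ⟨s(u₀, w₀), hmem, rfl⟩

section helpers
variable [DecidableEq V]


lemma edge_mem_of_length_one {u v : V} (p : G.Walk u v) (h : p.length = 1) :
    s(u, v) ∈ p.edges := by
  cases p with
  | nil => simp at h
  | cons h' q =>
    cases q with
    | nil => simp
    | cons h'' q' => simp [Walk.length_cons] at h

lemma length_eq_one_of_edge_mem {u v : V} {p : G.Walk u v} (hp : p.IsPath)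
    (h : s(u, v) ∈ p.edges) : p.length = 1 := by
  induction p with
  | nil => simp at h
  | @cons a x c h' q ih =>
    rw [Walk.edges_cons, List.mem_cons] at h
    rcases h with h | h
    · rw [Sym2.eq_iff] at h
      rcases h with ⟨-, hcx⟩ | ⟨hax, hca⟩
      · subst hcx
        have : q = Walk.nil := (Walk.isPath_iff_eq_nil (p := q)).mp hp.of_cons
        subst this; simp
      · exact absurd hax h'.ne
    · exact absurd (q.fst_mem_support_of_mem_edges h)
        ((Walk.cons_isPath_iff h' q).mp hp).2

lemma exists_shorter {s t u w : V} (p : G.Walk s t) (hu : u ∈ p.support)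
    (hw : w ∈ p.support) (huw : G.Adj u w) (he : s(u, w) ∉ p.edges) :
    ∃ q : G.Walk s t, q.length < p.length ∧ ∀ x ∈ q.support, x ∈ p.support := by
  induction p with
  | nil =>
    simp only [Walk.support_nil, List.mem_singleton] at hu hw
    exact absurd (hu.trans hw.symm) huw.ne
  | @cons a b c h' p' ih =>
    by_cases hua : u = a
    · subst hua
      -- direct shortcut: u = start of walk
      set P : G.Walk u c := Walk.cons h' p' with hP
      have hsp := congrArg Walk.length (P.take_spec hw)
      rw [Walk.length_append] at hsp
      have h0 : (P.takeUntil w hw).length ≠ 0 := fun h =>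
        huw.ne (Walk.eq_of_length_eq_zero h)
      have h1 : (P.takeUntil w hw).length ≠ 1 := fun h =>
        he (Walk.edges_takeUntil_subset P hw (edge_mem_of_length_one _ h))
      refine ⟨Walk.cons huw (P.dropUntil w hw), ?_, ?_⟩
      · rw [Walk.length_cons]; omega
      · intro x hx
        rw [Walk.support_cons, List.mem_cons] at hx
        rcases hx with rfl | hx
        · exact Walk.start_mem_support P
        · exact Walk.support_dropUntil_subset P hw hx
    · by_cases hwa : w = a
      · subst hwa
        set P : G.Walk w c := Walk.cons h' p' with hP
        have hsp := congrArg Walk.length (P.take_spec hu)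
        rw [Walk.length_append] at hsp
        have h0 : (P.takeUntil u hu).length ≠ 0 := fun h =>
          huw.ne (Walk.eq_of_length_eq_zero h).symm
        have h1 : (P.takeUntil u hu).length ≠ 1 := fun h =>
          he (by
            have := Walk.edges_takeUntil_subset P hu (edge_mem_of_length_one _ h)
            rwa [Sym2.eq_swap] at this)
        refine ⟨Walk.cons huw.symm (P.dropUntil u hu), ?_, ?_⟩
        · rw [Walk.length_cons]; omega
        · intro x hx
          rw [Walk.support_cons, List.mem_cons] at hx
          rcases hx with rfl | hx
          · exact Walk.start_mem_support P
          · exact Walk.support_dropUntil_subset P hu hx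
      · rw [Walk.support_cons, List.mem_cons] at hu hw
        have hu' : u ∈ p'.support := hu.resolve_left hua
        have hw' : w ∈ p'.support := hw.resolve_left hwa
        have he' : s(u, w) ∉ p'.edges := fun h => he (by simp [h])
        obtain ⟨q, hq1, hq2⟩ := ih hu' hw' he'
        refine ⟨Walk.cons h' q, by simpa using hq1, ?_⟩
        intro x hx
        rw [Walk.support_cons, List.mem_cons] at hx
        rcases hx with rfl | hx
        · simp
        · simp [hq2 x hx]

end helpers

/-- Key combinatorial lemma: a "minimal connector" through `A` has no missing chords. -/
lemma min_walk_no_chord [DecidableEq V] {s t : V} (A : Set V)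
    (hex : ∃ p : G.Walk s t, ∀ x ∈ p.support, x = s ∨ x = t ∨ x ∈ A) :
    ∃ p : G.Walk s t, p.IsPath ∧ (∀ x ∈ p.support, x = s ∨ x = t ∨ x ∈ A) ∧
      (∀ u w, u ∈ p.support → w ∈ p.support → G.Adj u w → s(u, w) ∈ p.edges) := by
  classical
  set Q : ℕ → Prop := fun n => ∃ p : G.Walk s t, p.length = n ∧
    ∀ x ∈ p.support, x = s ∨ x = t ∨ x ∈ A with hQ
  have hQex : ∃ n, Q n := by
    obtain ⟨p, hp⟩ := hex
    exact ⟨p.length, p, rfl, hp⟩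
  obtain ⟨p0, hp0len, hp0⟩ := Nat.find_spec hQex
  refine ⟨p0.bypass, p0.bypass_isPath, ?_, ?_⟩
  · intro x hx
    exact hp0 x (p0.support_bypass_subset hx)
  · intro u w hu hw huw
    by_contra he
    obtain ⟨q, hq1, hq2⟩ := exists_shorter p0.bypass hu hw huw he
    have h2 : Nat.find hQex ≤ q.length :=
      Nat.find_le ⟨q, rfl, fun x hx => hp0 x (p0.support_bypass_subset (hq2 x hx))⟩
    have h1 : p0.bypass.length ≤ Nat.find hQex := hp0len ▸ p0.length_bypass_le
    omega

universe u

lemma dirac : ∀ (n : ℕ) (V : Type u) [Fintype V] (G : SimpleGraph V),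
    Fintype.card V ≤ n → IsChordal G → ∀ a b : V, a ≠ b → ¬ G.Adj a b →
    ∃ v, Simplicial G v ∧ v ≠ b ∧ ¬ G.Adj v b := by
  intro n
  induction n with
  | zero =>
    intro V _ G hcard _ a _ _ _
    have : IsEmpty V := Fintype.card_eq_zero_iff.mp (Nat.le_zero.mp hcard)
    exact (this.false a).elim
  | succ n ih =>
    intro V _ G hcard hch a b hab hnadj
    classical
    set W : Set V := {x | x ≠ b ∧ ¬ G.Adj b x} with hW
    have haW : a ∈ W := ⟨hab, fun h => hnadj h.symm⟩
    set A : Set V := {x | ∃ hx : x ∈ W, (G.induce W).Reachable ⟨a, haW⟩ ⟨x, hx⟩} with hA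
    have haA : a ∈ A := ⟨haW, Reachable.refl _⟩
    have hAW : A ⊆ W := fun x hx => hx.1
    set S : Set V := {y | y ∉ A ∧ ∃ x ∈ A, G.Adj x y} with hS
    have K1 : ∀ x ∈ A, ∀ y, G.Adj x y → y ∈ A ∪ S := by
      intro x hx y hxy
      by_cases hyA : y ∈ A
      · exact Or.inl hyA
      · exact Or.inr ⟨hyA, x, hx, hxy⟩
    have K2 : ∀ x ∈ A, ∀ y, y ∈ W → G.Adj x y → y ∈ A := by
      rintro x ⟨hxW, hreach⟩ y hyW hxy
      refine ⟨hyW, hreach.trans ?_⟩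
      exact SimpleGraph.Adj.reachable (by exact hxy)
    have K3 : ∀ y ∈ S, G.Adj b y := by
      rintro y ⟨hyA, x, hxA, hxy⟩
      by_cases hyW : y ∈ W
      · exact absurd (K2 x hxA y hyW hxy) hyA
      · by_cases hyb : y = b
        · subst hyb
          exact absurd hxy.symm (hAW hxA).2
        · rw [hW, Set.mem_setOf_eq, not_and, not_not] at hyW
          exact hyW hyb
    have K4 : ∀ x ∈ A, ¬ G.Adj b x := fun x hx => (hAW hx).2
    have hbA : b ∉ A := fun h => (hAW h).1 rfl
    have hbS : b ∉ S := fun h => (K3 b h).ne rfl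
    have K5 : ∀ s t, s ∈ S → t ∈ S → s ≠ t → G.Adj s t := by
      intro s t hsS htS hst
      by_contra hnst
      have hbs : G.Adj b s := K3 s hsS
      have hbt : G.Adj b t := K3 t htS
      obtain ⟨-, x₁, hx₁A, hx₁s⟩ := hsS
      obtain ⟨-, x₂, hx₂A, hx₂t⟩ := htS
      have hex : ∃ p : G.Walk s t, ∀ x ∈ p.support, x = s ∨ x = t ∨ x ∈ A := by
        obtain ⟨h1W, r1⟩ := hx₁A
        obtain ⟨h2W, r2⟩ := hx₂A
        obtain ⟨q0⟩ := r1.symm.trans r2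
        have hq0A : ∀ z ∈ q0.support, (z : V) ∈ A := by
          intro z hz
          exact ⟨z.2, r1.trans ⟨q0.takeUntil z hz⟩⟩
        set f := (SimpleGraph.Embedding.induce W (G := G)).toHom with hf
        set q1 : G.Walk x₁ x₂ := q0.map f with hq1
        have hq1A : ∀ z ∈ q1.support, z ∈ A := by
          intro z hz
          replace hz : z ∈ (q0.map f).support := hz
          rw [SimpleGraph.Walk.support_map, List.mem_map] at hz
          obtain ⟨z₀, hz₀, rfl⟩ := hz
          exact hq0A z₀ hz₀
        refine ⟨SimpleGraph.Walk.cons hx₁s.symm (q1.concat hx₂t), ?_⟩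
        intro x hx
        rw [SimpleGraph.Walk.support_cons, List.mem_cons] at hx
        rcases hx with rfl | hx
        · exact Or.inl rfl
        · rw [SimpleGraph.Walk.support_concat, List.mem_append,
            List.mem_singleton] at hx
          rcases hx with hx | rfl
          · exact Or.inr (Or.inr (hq1A x hx))
          · exact Or.inr (Or.inl rfl)
      obtain ⟨p, hpath, hsupp, hmin⟩ := min_walk_no_chord A hex
      have hbsupp : b ∉ p.support := by
        intro hb
        rcases hsupp b hb with rfl | rfl | hbA'
        · exact hbs.ne rfl
        · exact hbt.ne rfl
        · exact hbA hbA'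
      have hplen : 2 ≤ p.length := by
        have h3 : p.length = 0 ∨ p.length = 1 ∨ 2 ≤ p.length := by omega
        rcases h3 with h' | h' | h'
        · exact absurd (SimpleGraph.Walk.eq_of_length_eq_zero h') hst
        · exact absurd (p.adj_of_mem_edges (edge_mem_of_length_one p h')) hnst
        · exact h'
      set c : G.Walk b b := SimpleGraph.Walk.cons hbs (p.concat hbt.symm) with hc
      have hcyc : c.IsCycle := by
        rw [hc, SimpleGraph.Walk.cons_isCycle_iff]
        constructor
        · rw [SimpleGraph.Walk.isPath_def, SimpleGraph.Walk.support_concat,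
            List.nodup_append]
          refine ⟨hpath.support_nodup, List.nodup_singleton b, ?_⟩
          intro z hz z' hz' hzz
          rw [List.mem_singleton] at hz'
          rw [hzz, hz'] at hz
          exact hbsupp hz
        · intro hmem
          rw [SimpleGraph.Walk.edges_concat, List.concat_eq_append, List.mem_append,
            List.mem_singleton] at hmem
          rcases hmem with hmem | hmem
          · exact hbsupp (p.fst_mem_support_of_mem_edges hmem)
          · rw [Sym2.eq_iff] at hmem
            rcases hmem with ⟨hbt', -⟩ | ⟨-, hst'⟩
            · exact hbt.ne hbt'
            · exact hst hst'
      have hclen : 4 ≤ c.length := by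
        rw [hc, SimpleGraph.Walk.length_cons, SimpleGraph.Walk.length_concat]
        omega
      obtain ⟨u, w, hu, hw, huw, hne⟩ := hch c hcyc hclen
      have hmemc : ∀ z, z ∈ c.support → z = b ∨ z ∈ p.support := by
        intro z hz
        rw [hc, SimpleGraph.Walk.support_cons, List.mem_cons,
          SimpleGraph.Walk.support_concat, List.mem_append,
          List.mem_singleton] at hz
        tauto
      have hedgec : ∀ e ∈ p.edges, e ∈ c.edges := by
        intro e he
        rw [hc, SimpleGraph.Walk.edges_cons, SimpleGraph.Walk.edges_concat,
          List.concat_eq_append, List.mem_cons, List.mem_append]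
        tauto
      have hedge1 : s(b, s) ∈ c.edges := by
        rw [hc, SimpleGraph.Walk.edges_cons]
        exact List.mem_cons_self
      have hedge2 : s(t, b) ∈ c.edges := by
        rw [hc, SimpleGraph.Walk.edges_cons, SimpleGraph.Walk.edges_concat,
          List.concat_eq_append, List.mem_cons, List.mem_append, List.mem_singleton]
        tauto
      have key : ∀ z, G.Adj b z → z ∈ p.support → s(b, z) ∈ c.edges := by
        intro z hbz hzp
        rcases hsupp z hzp with rfl | rfl | hzA
        · exact hedge1
        · rw [Sym2.eq_swap]
          exact hedge2
        · exact absurd hbz (K4 z hzA)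
      rcases hmemc u hu with rfl | hup
      · rcases hmemc w hw with rfl | hwp
        · exact huw.ne rfl
        · exact hne (key w huw hwp)
      · rcases hmemc w hw with rfl | hwp
        · refine hne ?_
          rw [Sym2.eq_swap]
          exact key u huw.symm hup
        · exact hne (hedgec _ (hmin u w hup hwp huw))
    -- main case split
    have hASlt : Fintype.card ↥(A ∪ S) ≤ n := by
      have hb : b ∉ Set.range (Subtype.val : ↥(A ∪ S) → V) := by
        intro hmem
        obtain ⟨x0, hx0⟩ := hmem
        rcases (hx0 ▸ x0.2 : b ∈ A ∪ S) with h | h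
        · exact hbA h
        · exact hbS h
      have hlt : Fintype.card ↥(A ∪ S) < Fintype.card V :=
        Fintype.card_lt_of_injective_of_notMem _ Subtype.val_injective hb
      omega
    by_cases hcase : ∃ s', s' ∈ S ∧ ∃ x ∈ A ∪ S, x ≠ s' ∧ ¬ G.Adj x s'
    · obtain ⟨s', hs'S, x, hxAS, hxs, hnadjxs⟩ := hcase
      have hs'AS : s' ∈ A ∪ S := Or.inr hs'S
      obtain ⟨v', hv'simp, hv'ne, hv'nadj⟩ :=
        ih ↥(A ∪ S) (G.induce (A ∪ S)) hASlt (isChordal_induce hch _)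
          ⟨x, hxAS⟩ ⟨s', hs'AS⟩ (by simpa [Subtype.ext_iff] using hxs)
          (by simpa using hnadjxs)
      have hv'A : (v' : V) ∈ A := by
        rcases v'.2 with h | h
        · exact h
        · refine absurd (K5 _ _ h hs'S ?_ : G.Adj (v' : V) s') (by simpa using hv'nadj)
          simpa [Subtype.ext_iff] using hv'ne
      refine ⟨v', ?_, (hAW hv'A).1, fun h => (hAW hv'A).2 h.symm⟩
      intro y hy z hz hyz
      have hyAS : y ∈ A ∪ S := K1 _ hv'A y hy
      have hzAS : z ∈ A ∪ S := K1 _ hv'A z hz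
      have := hv'simp (y := ⟨y, hyAS⟩) (by simpa using hy) (z := ⟨z, hzAS⟩)
        (by simpa using hz) (by simpa [Subtype.ext_iff] using hyz)
      simpa using this
    · push_neg at hcase
      by_cases hAclique : ∀ x ∈ A, ∀ y ∈ A, x ≠ y → G.Adj x y
      · refine ⟨a, ?_, hab, hnadj⟩
        intro y hy z hz hyz
        have hyAS := K1 a haA y hy
        have hzAS := K1 a haA z hz
        rcases hzAS with hz' | hz'
        · rcases hyAS with hy' | hy'
          · exact hAclique y hy' z hz' hyz
          · exact (hcase y hy' z (Or.inl hz') (Ne.symm hyz)).symm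
        · exact hcase z hz' y hyAS hyz
      · push_neg at hAclique
        obtain ⟨x, hxA, y, hyA, hxy, hnxy⟩ := hAclique
        have hAlt : Fintype.card ↥A ≤ n := by
          have hb : b ∉ Set.range (Subtype.val : ↥A → V) := by
            intro hmem
            obtain ⟨x0, hx0⟩ := hmem
            exact hbA (hx0 ▸ x0.2)
          have hlt : Fintype.card ↥A < Fintype.card V :=
            Fintype.card_lt_of_injective_of_notMem _ Subtype.val_injective hb
          omega
        obtain ⟨v'', hv''simp, -, -⟩ :=
          ih ↥A (G.induce A) hAlt (isChordal_induce hch _) ⟨x, hxA⟩ ⟨y, hyA⟩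
            (by simpa [Subtype.ext_iff] using hxy) (by simpa using hnxy)
        refine ⟨v'', ?_, (hAW v''.2).1, fun h => (hAW v''.2).2 h.symm⟩
        intro p hp q hq hpq
        have hpAS := K1 _ v''.2 p hp
        have hqAS := K1 _ v''.2 q hq
        rcases hqAS with hq' | hq'
        · rcases hpAS with hp' | hp'
          · have := hv''simp (y := ⟨p, hp'⟩) (by simpa using hp) (z := ⟨q, hq'⟩)
              (by simpa using hq) (by simpa [Subtype.ext_iff] using hpq)
            simpa using this
          · exact (hcase p hp' q (Or.inl hq') (Ne.symm hpq)).symm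
        · exact hcase q hq' p hpAS hpq

lemma exists_simplicial {V : Type u} [Fintype V] [Nonempty V] (G : SimpleGraph V)
    (hch : IsChordal G) : ∃ v, Simplicial G v := by
  classical
  by_cases hcomp : ∀ x y : V, x ≠ y → G.Adj x y
  · obtain ⟨v⟩ := ‹Nonempty V›
    exact ⟨v, fun y _ z _ hyz => hcomp y z hyz⟩
  · push_neg at hcomp
    obtain ⟨x, y, hxy, hnadj⟩ := hcomp
    obtain ⟨v, hv, -, -⟩ := dirac (Fintype.card V) V G le_rfl hch x y hxy hnadj
    exact ⟨v, hv⟩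

lemma exists_peo : ∀ (n : ℕ) (V : Type u) [Fintype V] (G : SimpleGraph V),
    Fintype.card V = n → IsChordal G →
    ∃ σ : Fin n ≃ V, ∀ i : Fin n, G.IsClique {w : V | G.Adj (σ i) w ∧ i < σ.symm w} := by
  intro n
  induction n with
  | zero =>
    intro V _ G hcard _
    haveI : IsEmpty V := Fintype.card_eq_zero_iff.mp hcard
    exact ⟨Equiv.equivOfIsEmpty _ _, fun i => i.elim0⟩
  | succ n ih =>
    intro V _ G hcard hch
    classical
    haveI : Nonempty V := Fintype.card_pos_iff.mp (by omega)
    obtain ⟨v, hv⟩ := exists_simplicial G hch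
    set Vs : Set V := {x | x ≠ v} with hVs
    have hcard' : Fintype.card ↥Vs = n := by
      have h1 : Fintype.card ↥Vs = Fintype.card V - Fintype.card {x : V // x = v} := by
        rw [← Fintype.card_subtype_compl (fun x : V => x = v)]
        exact Fintype.card_congr (Equiv.refl _)
      rw [h1, Fintype.card_subtype_eq, hcard]
      omega
    obtain ⟨σ', hσ'⟩ := ih ↥Vs (G.induce Vs) hcard' (isChordal_induce hch _)
    set σ : Fin (n + 1) ≃ V :=
      (finSuccEquiv n).trans (σ'.optionCongr.trans (Equiv.optionSubtypeNe v)) with hσdef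
    have hσ0 : σ 0 = v := by
      simp only [hσdef, Equiv.trans_apply, finSuccEquiv_zero, Equiv.optionCongr_apply,
        Option.map_none]
      rfl
    have hσsucc : ∀ i : Fin n, σ i.succ = (σ' i : V) := by
      intro i
      simp only [hσdef, Equiv.trans_apply, finSuccEquiv_succ, Equiv.optionCongr_apply,
        Option.map_some]
      rfl
    have hsymm_v : σ.symm v = 0 := by
      rw [← hσ0, Equiv.symm_apply_apply]
    have hsymm_ne : ∀ w (hw : w ≠ v), σ.symm w = (σ'.symm ⟨w, hw⟩).succ := by
      intro w hw
      apply σ.injective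
      rw [Equiv.apply_symm_apply, hσsucc, Equiv.apply_symm_apply]
    refine ⟨σ, fun i => ?_⟩
    refine Fin.cases ?_ ?_ i
    · rw [SimpleGraph.isClique_iff]
      intro y hy z hz hyz
      rw [Set.mem_setOf_eq, hσ0] at hy hz
      exact hv hy.1 hz.1 hyz
    · intro j
      rw [SimpleGraph.isClique_iff]
      intro y hy z hz hyz
      rw [Set.mem_setOf_eq] at hy hz
      have hyv : y ≠ v := by
        rintro rfl
        rw [hsymm_v] at hy
        exact absurd hy.2 (by simp)
      have hzv : z ≠ v := by
        rintro rfl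
        rw [hsymm_v] at hz
        exact absurd hz.2 (by simp)
      have hy1 : (G.induce Vs).Adj (σ' j) ⟨y, hyv⟩ := by
        have := hy.1
        rw [hσsucc] at this
        exact this
      have hz1 : (G.induce Vs).Adj (σ' j) ⟨z, hzv⟩ := by
        have := hz.1
        rw [hσsucc] at this
        exact this
      have hy2 : j < σ'.symm ⟨y, hyv⟩ := by
        have := hy.2
        rw [hsymm_ne y hyv] at this
        exact Fin.succ_lt_succ_iff.mp this
      have hz2 : j < σ'.symm ⟨z, hzv⟩ := by
        have := hz.2
        rw [hsymm_ne z hzv] at this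
        exact Fin.succ_lt_succ_iff.mp this
      have := (SimpleGraph.isClique_iff _).mp (hσ' j)
        (show (⟨y, hyv⟩ : ↥Vs) ∈ _ from ⟨hy1, hy2⟩)
        (show (⟨z, hzv⟩ : ↥Vs) ∈ _ from ⟨hz1, hz2⟩)
        (by simpa [Subtype.ext_iff] using hyz)
      exact this



lemma exists_eq_concat_of_not_nil {u x : V} (q : G.Walk u x) (h : ¬ q.Nil) :
    ∃ (w : V) (r : G.Walk u w) (h' : G.Adj w x), q = r.concat h' := by
  cases q with
  | nil => simp at h
  | cons h' q' => exact SimpleGraph.Walk.exists_cons_eq_concat h' q'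

lemma peo_chordal [Fintype V] (σ : Fin (Fintype.card V) ≃ V)
    (hσ : ∀ i : Fin (Fintype.card V),
      G.IsClique {w : V | G.Adj (σ i) w ∧ i < σ.symm w}) :
    ∀ ⦃v : V⦄ (c : G.Walk v v), c.IsCycle → 4 ≤ c.length →
      ∃ u w : V, u ∈ c.support ∧ w ∈ c.support ∧ G.Adj u w ∧ s(u, w) ∉ c.edges := by
  classical
  intro v c hc hlen
  have hvs : v ∈ c.support := c.start_mem_support
  set T : Finset (Fin (Fintype.card V)) := c.support.toFinset.image σ.symm with hT
  have hTne : T.Nonempty := ⟨σ.symm v, Finset.mem_image_of_mem _ (List.mem_toFinset.mpr hvs)⟩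
  set i₀ := T.min' hTne with hi₀
  have hxmem : σ i₀ ∈ c.support := by
    obtain ⟨y, hy, hyeq⟩ := Finset.mem_image.mp (T.min'_mem hTne)
    rw [hi₀, ← hyeq, Equiv.apply_symm_apply]
    exact List.mem_toFinset.mp hy
  have hmin : ∀ y ∈ c.support, i₀ ≤ σ.symm y := fun y hy =>
    T.min'_le _ (Finset.mem_image_of_mem _ (List.mem_toFinset.mpr hy))
  set x := σ i₀ with hxdef
  set c' := c.rotate x hxmem with hc'def
  have hcyc' : c'.IsCycle := hc.rotate hxmem
  have hedges : ∀ e, e ∈ c'.edges ↔ e ∈ c.edges := fun e =>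
    (SimpleGraph.Walk.rotate_edges c x hxmem).mem_iff
  have hlen' : c'.length = c.length := by
    have h1 := congrArg SimpleGraph.Walk.length (c.take_spec hxmem)
    rw [SimpleGraph.Walk.length_append] at h1
    rw [hc'def, SimpleGraph.Walk.rotate, SimpleGraph.Walk.length_append]
    omega
  have hnn : ¬ c'.Nil := by
    rw [SimpleGraph.Walk.nil_iff_length_eq]
    omega
  obtain ⟨u, hxu, q, hq⟩ := SimpleGraph.Walk.not_nil_iff.mp hnn
  have hqlen : q.length + 1 = c.length := by
    have := congrArg SimpleGraph.Walk.length hq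
    rw [SimpleGraph.Walk.length_cons] at this
    omega
  have hqnn : ¬ q.Nil := by
    rw [SimpleGraph.Walk.nil_iff_length_eq]
    omega
  obtain ⟨w, r, hwx, hr⟩ := exists_eq_concat_of_not_nil q hqnn
  rw [hr] at hq
  have hrlen : r.length + 2 = c.length := by
    have := congrArg SimpleGraph.Walk.length hr
    rw [SimpleGraph.Walk.length_concat] at this
    omega
  have hcyc'' : (SimpleGraph.Walk.cons hxu (r.concat hwx)).IsCycle := hq ▸ hcyc'
  rw [SimpleGraph.Walk.cons_isCycle_iff] at hcyc''
  obtain ⟨hpath, hxe⟩ := hcyc''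
  have hrpath : r.IsPath ∧ x ∉ r.support := by
    rw [SimpleGraph.Walk.isPath_def, SimpleGraph.Walk.support_concat,
      List.nodup_append] at hpath
    exact ⟨(SimpleGraph.Walk.isPath_def r).mpr hpath.1,
      fun hx' => hpath.2.2 x hx' x (List.mem_singleton_self x) rfl⟩
  have huwne : u ≠ w := by
    rintro rfl
    have := (SimpleGraph.Walk.isPath_iff_eq_nil (p := r)).mp hrpath.1
    subst this
    simp at hrlen
    omega
  have hux : u ≠ x := hxu.ne'
  have hwxne : w ≠ x := hwx.ne
  have hu_supp : u ∈ c.support := by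
    refine c.snd_mem_support_of_mem_edges (t := x) ?_
    rw [← hedges, hq, SimpleGraph.Walk.edges_cons]
    exact List.mem_cons_self
  have hw_supp : w ∈ c.support := by
    refine c.fst_mem_support_of_mem_edges (u := x) ?_
    rw [← hedges, hq, SimpleGraph.Walk.edges_cons, SimpleGraph.Walk.edges_concat,
      List.concat_eq_append, List.mem_cons, List.mem_append, List.mem_singleton]
    tauto
  have hiu : i₀ < σ.symm u := by
    refine lt_of_le_of_ne (hmin u hu_supp) fun h => hux ?_
    rw [← Equiv.apply_symm_apply σ u, ← h, ← hxdef]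
  have hiw : i₀ < σ.symm w := by
    refine lt_of_le_of_ne (hmin w hw_supp) fun h => hwxne ?_
    rw [← Equiv.apply_symm_apply σ w, ← h, ← hxdef]
  have hadj : G.Adj u w := by
    have hcl := (SimpleGraph.isClique_iff _).mp (hσ i₀)
    exact hcl (show u ∈ _ from ⟨hxu, hiu⟩) (show w ∈ _ from ⟨hwx.symm, hiw⟩) huwne
  refine ⟨u, w, hu_supp, hw_supp, hadj, ?_⟩
  intro hmem
  rw [← hedges, hq, SimpleGraph.Walk.edges_cons, SimpleGraph.Walk.edges_concat,
    List.concat_eq_append, List.mem_cons, List.mem_append, List.mem_singleton] at hmem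
  rcases hmem with h | h | h
  · rw [Sym2.eq_iff] at h
    rcases h with ⟨h1, -⟩ | ⟨-, h2⟩
    · exact hux h1
    · exact hwxne h2
  · have := length_eq_one_of_edge_mem hrpath.1 h
    omega
  · rw [Sym2.eq_iff] at h
    rcases h with ⟨h1, -⟩ | ⟨h1, -⟩
    · exact huwne h1
    · exact hux h1

end ChordalAux

/-- Fulkerson–Gross: a finite simple graph is chordal iff it has a
perfect elimination ordering: an ordering `σ` of the vertices such that for each
`i`, the later neighbors of `σ i` form a clique. -/
theorem chordal_iff_perfect_elimination_ordering {V : Type*} [Fintype V]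
    (G : SimpleGraph V) :
    IsChordal G ↔ ∃ σ : Fin (Fintype.card V) ≃ V,
      ∀ i : Fin (Fintype.card V),
        G.IsClique {w : V | G.Adj (σ i) w ∧ i < σ.symm w} := by
  constructor
  · intro hch
    exact ChordalAux.exists_peo (Fintype.card V) V G rfl hch
  · rintro ⟨σ, hσ⟩
    exact ChordalAux.peo_chordal σ hσ
end
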